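/- (Change of variable for the second-order (kinetic) Schrödinger system.) Let d ∈ ℕ and write points of ℝ^d × ℝ^d as z = (x, v). Let b̄(x, v) := (v, −x − 2v) be the critically damped reference drift, so ∇·b̄ ≡ −2d. Let λ : ℝ × ℝ^d × ℝ^d → ℝ be differentiable in t and twice continuously differentiable in (x, v), satisfying for all (t, x, v): ∂_t λ = −2‖∇_V λ‖² − ⟨∇_{(X,V)} λ, b̄⟩ − 2Δ_V λ. Let ρ : ℝ × ℝ^d × ℝ^d → (0, ∞) be differentiable in t and twice continuously differentiable in (x, v), satisfying the kinetic Fokker–Planck equation for all (t, x, v): ∂_t ρ + ∇_X·(ρ·v) + ∇_V·(ρ·(−x + 4∇_V λ − 2v − 2∇_V log ρ)) = 0. Then η := log ρ − λ satisfies for all (t, x, v): ∂_t η = −⟨∇_{(X,V)} η, b̄⟩ − ∇·b̄ + 2‖∇_V η‖² + 2Δ_V η, i.e. ∂_t η = −⟨∇_X η, v⟩ + ⟨∇_V η, x + 2v⟩ + 2d + 2‖∇_V η‖² + 2Δ_V η. -/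

import Mathlib

open scoped RealInnerProductSpace

/-- The Laplacian of `f : ℝ^d → ℝ` at `x`: trace of the second Fréchet derivative. -/
noncomputable def lapE {d : ℕ} (f : EuclideanSpace ℝ (Fin d) → ℝ)
    (x : EuclideanSpace ℝ (Fin d)) : ℝ :=
  ∑ i, fderiv ℝ (fderiv ℝ f) x (EuclideanSpace.single i 1) (EuclideanSpace.single i 1)

/-- The divergence of a vector field `w : ℝ^d → ℝ^d` at `x`. -/
noncomputable def divergE {d : ℕ} (w : EuclideanSpace ℝ (Fin d) → EuclideanSpace ℝ (Fin d))
    (x : EuclideanSpace ℝ (Fin d)) : ℝ :=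
  ∑ i, ⟪fderiv ℝ w x (EuclideanSpace.single i 1), EuclideanSpace.single i 1⟫

/-- Gradient in the position variables. -/
noncomputable def gradX {d : ℕ} (g : EuclideanSpace ℝ (Fin d) → EuclideanSpace ℝ (Fin d) → ℝ)
    (x v : EuclideanSpace ℝ (Fin d)) : EuclideanSpace ℝ (Fin d) :=
  gradient (fun y => g y v) x

/-- Gradient in the velocity variables. -/
noncomputable def gradV {d : ℕ} (g : EuclideanSpace ℝ (Fin d) → EuclideanSpace ℝ (Fin d) → ℝ)
    (x v : EuclideanSpace ℝ (Fin d)) : EuclideanSpace ℝ (Fin d) :=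
  gradient (fun u => g x u) v

/-- Laplacian in the velocity variables. -/
noncomputable def lapV {d : ℕ} (g : EuclideanSpace ℝ (Fin d) → EuclideanSpace ℝ (Fin d) → ℝ)
    (x v : EuclideanSpace ℝ (Fin d)) : ℝ :=
  lapE (fun u => g x u) v

/-- Divergence in the position variables. -/
noncomputable def divX {d : ℕ}
    (w : EuclideanSpace ℝ (Fin d) → EuclideanSpace ℝ (Fin d) → EuclideanSpace ℝ (Fin d))
    (x v : EuclideanSpace ℝ (Fin d)) : ℝ :=
  divergE (fun y => w y v) x

/-- Divergence in the velocity variables. -/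
noncomputable def divV {d : ℕ}
    (w : EuclideanSpace ℝ (Fin d) → EuclideanSpace ℝ (Fin d) → EuclideanSpace ℝ (Fin d))
    (x v : EuclideanSpace ℝ (Fin d)) : ℝ :=
  divergE (fun u => w x u) v

section Helpers
variable {d : ℕ}
local notation "E" => EuclideanSpace ℝ (Fin d)

theorem sum_inner_single_mul (a b : E) :
    ∑ i, ⟪a, EuclideanSpace.single i 1⟫ * ⟪b, EuclideanSpace.single i 1⟫ = ⟪a, b⟫ := by
  have := (EuclideanSpace.basisFun (Fin d) ℝ).sum_inner_mul_inner a b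
  simp only [EuclideanSpace.basisFun_apply] at this
  rw [← this]; congr 1; ext i; rw [real_inner_comm b]

theorem inner_gradient_eq (f : E → ℝ) (x y : E) :
    ⟪gradient f x, y⟫ = fderiv ℝ f x y := by
  rw [gradient, InnerProductSpace.toDual_symm_apply]

theorem gradient_sub' (f g : E → ℝ) (x : E) (hf : DifferentiableAt ℝ f x)
    (hg : DifferentiableAt ℝ g x) :
    gradient (fun y => f y - g y) x = gradient f x - gradient g x := by
  simp only [gradient, fderiv_fun_sub hf hg, map_sub]

theorem gradient_log' (f : E → ℝ) (x : E) (hf : DifferentiableAt ℝ f x) (hx : f x ≠ 0) :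
    gradient (fun y => Real.log (f y)) x = (f x)⁻¹ • gradient f x := by
  have := (hf.hasFDerivAt.log hx).fderiv
  simp only [gradient, this, map_smul]

theorem divergE_add (w₁ w₂ : E → E) (x : E) (h₁ : DifferentiableAt ℝ w₁ x)
    (h₂ : DifferentiableAt ℝ w₂ x) :
    divergE (fun y => w₁ y + w₂ y) x = divergE w₁ x + divergE w₂ x := by
  simp only [divergE, fderiv_fun_add h₁ h₂]
  rw [← Finset.sum_add_distrib]
  congr 1; ext i
  simp [inner_add_left]

theorem divergE_sub (w₁ w₂ : E → E) (x : E) (h₁ : DifferentiableAt ℝ w₁ x)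
    (h₂ : DifferentiableAt ℝ w₂ x) :
    divergE (fun y => w₁ y - w₂ y) x = divergE w₁ x - divergE w₂ x := by
  simp only [divergE, fderiv_fun_sub h₁ h₂]
  rw [← Finset.sum_sub_distrib]
  congr 1; ext i
  simp [inner_sub_left]

theorem divergE_const (c : E) (x : E) : divergE (fun _ => c) x = 0 := by
  simp [divergE]

theorem divergE_id (x : E) : divergE (fun y : E => y) x = d := by
  simp only [divergE, fderiv_id']
  simp [real_inner_self_eq_norm_sq]

theorem divergE_smul_const (c : ℝ) (w : E → E) (x : E) (h : DifferentiableAt ℝ w x) :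
    divergE (fun y => c • w y) x = c * divergE w x := by
  simp only [divergE, fderiv_fun_const_smul h]
  rw [Finset.mul_sum]
  congr 1; ext i
  simp [inner_smul_left]

theorem divergE_smul_fun (f : E → ℝ) (w : E → E) (x : E) (hf : DifferentiableAt ℝ f x)
    (hw : DifferentiableAt ℝ w x) :
    divergE (fun y => f y • w y) x = ⟪gradient f x, w x⟫ + f x * divergE w x := by
  simp only [divergE, fderiv_fun_smul hf hw]
  simp only [ContinuousLinearMap.add_apply, ContinuousLinearMap.smul_apply,
    ContinuousLinearMap.smulRight_apply, inner_add_left, inner_smul_left,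
    RCLike.star_def, conj_trivial]
  rw [Finset.sum_add_distrib]
  have h1 : ∑ i, fderiv ℝ f x (EuclideanSpace.single i 1) * ⟪w x, EuclideanSpace.single i 1⟫
      = ⟪gradient f x, w x⟫ := by
    rw [← sum_inner_single_mul (gradient f x) (w x)]
    congr 1; ext i
    rw [inner_gradient_eq]
  have h2 : ∑ i, f x * ⟪fderiv ℝ w x (EuclideanSpace.single i 1), EuclideanSpace.single i 1⟫
      = f x * divergE w x := by rw [divergE, Finset.mul_sum]
  rw [divergE, ← Finset.mul_sum] at *
  linarith

theorem gradient_differentiable (f : E → ℝ) (hf : ContDiff ℝ 2 f) :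
    Differentiable ℝ (gradient f) := by
  have : gradient f = ⇑(InnerProductSpace.toDual ℝ (EuclideanSpace ℝ (Fin d))).symm ∘ fderiv ℝ f := rfl
  rw [this]
  exact (InnerProductSpace.toDual ℝ (EuclideanSpace ℝ (Fin d))).symm.toContinuousLinearEquiv.differentiable.comp
    ((hf.fderiv_right (m := 1) (by norm_num)).differentiable one_ne_zero)

theorem divergE_gradient (f : E → ℝ) (x : E) (hf : ContDiff ℝ 2 f) :
    divergE (gradient f) x = lapE f x := by
  have hg : DifferentiableAt ℝ (fderiv ℝ f) x :=
    ((hf.fderiv_right (m := 1) (by norm_num)).differentiable one_ne_zero) x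
  rw [divergE, lapE]
  congr 1; ext i
  have : gradient f = ⇑(InnerProductSpace.toDual ℝ (EuclideanSpace ℝ (Fin d))).symm ∘ fderiv ℝ f := rfl
  rw [this, LinearIsometryEquiv.comp_fderiv]
  simp only [ContinuousLinearMap.coe_comp', Function.comp_apply,
    LinearIsometryEquiv.coe_toContinuousLinearEquiv, ContinuousLinearEquiv.coe_coe]
  exact InnerProductSpace.toDual_symm_apply

theorem lapE_sub (f g : E → ℝ) (x : E) (hf : ContDiff ℝ 2 f) (hg : ContDiff ℝ 2 g) :
    lapE (fun y => f y - g y) x = lapE f x - lapE g x := by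
  have hfd : Differentiable ℝ f := hf.differentiable two_ne_zero
  have hgd : Differentiable ℝ g := hg.differentiable two_ne_zero
  have h1 : (fderiv ℝ (fun y => f y - g y)) = fun y => fderiv ℝ f y - fderiv ℝ g y := by
    ext1 y; exact fderiv_fun_sub (hfd y) (hgd y)
  have hf' : DifferentiableAt ℝ (fderiv ℝ f) x :=
    ((hf.fderiv_right (m := 1) (by norm_num)).differentiable one_ne_zero) x
  have hg' : DifferentiableAt ℝ (fderiv ℝ g) x :=
    ((hg.fderiv_right (m := 1) (by norm_num)).differentiable one_ne_zero) x
  rw [lapE, lapE, lapE, ← Finset.sum_sub_distrib]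
  congr 1; ext i
  rw [h1, fderiv_fun_sub hf' hg']
  simp

theorem partial_contDiff_left {g : E × E → ℝ} (hg : ContDiff ℝ 2 g) (v : E) :
    ContDiff ℝ 2 (fun y : E => g (y, v)) :=
  hg.comp (contDiff_id.prodMk contDiff_const)

theorem partial_contDiff_right {g : E × E → ℝ} (hg : ContDiff ℝ 2 g) (x : E) :
    ContDiff ℝ 2 (fun u : E => g (x, u)) :=
  hg.comp (contDiff_const.prodMk contDiff_id)

end Helpers

/-- Change of variable for the second-order (kinetic) Schrödinger system: if `λ` solves
`∂ₜλ = -2‖∇_Vλ‖² - ⟨∇_{(X,V)}λ, b̄⟩ - 2Δ_Vλ` with `b̄(x,v) = (v, -x-2v)`, and `ρ > 0`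
solves the kinetic Fokker–Planck equation
`∂ₜρ + ∇_X·(ρv) + ∇_V·(ρ(-x + 4∇_Vλ - 2v - 2∇_V log ρ)) = 0`, then `η := log ρ - λ`
satisfies `∂ₜη = -⟨∇_Xη, v⟩ + ⟨∇_Vη, x+2v⟩ + 2d + 2‖∇_Vη‖² + 2Δ_Vη`. -/
theorem stmt18 {d : ℕ}
    (l : ℝ → EuclideanSpace ℝ (Fin d) → EuclideanSpace ℝ (Fin d) → ℝ)
    (hlt : ∀ x v, Differentiable ℝ fun t => l t x v)
    (hlxv : ∀ t, ContDiff ℝ 2 fun p : EuclideanSpace ℝ (Fin d) × EuclideanSpace ℝ (Fin d) =>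
      l t p.1 p.2)
    (hl : ∀ t x v, deriv (fun s => l s x v) t
      = -2 * ‖gradV (l t) x v‖ ^ 2
        - (⟪gradX (l t) x v, v⟫ + ⟪gradV (l t) x v, -x - (2 : ℝ) • v⟫)
        - 2 * lapV (l t) x v)
    (ρ : ℝ → EuclideanSpace ℝ (Fin d) → EuclideanSpace ℝ (Fin d) → ℝ)
    (hρpos : ∀ t x v, 0 < ρ t x v)
    (hρt : ∀ x v, Differentiable ℝ fun t => ρ t x v)
    (hρxv : ∀ t, ContDiff ℝ 2 fun p : EuclideanSpace ℝ (Fin d) × EuclideanSpace ℝ (Fin d) =>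
      ρ t p.1 p.2)
    (hFP : ∀ t x v, deriv (fun s => ρ s x v) t
      + divX (fun y u => ρ t y u • u) x v
      + divV (fun y u => ρ t y u •
          (-y + (4 : ℝ) • gradV (l t) y u - (2 : ℝ) • u
            - (2 : ℝ) • gradV (fun a b => Real.log (ρ t a b)) y u)) x v = 0) :
    ∀ t x v, deriv (fun s => Real.log (ρ s x v) - l s x v) t
      = -⟪gradX (fun y u => Real.log (ρ t y u) - l t y u) x v, v⟫
        + ⟪gradV (fun y u => Real.log (ρ t y u) - l t y u) x v, x + (2 : ℝ) • v⟫
        + 2 * d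
        + 2 * ‖gradV (fun y u => Real.log (ρ t y u) - l t y u) x v‖ ^ 2
        + 2 * lapV (fun y u => Real.log (ρ t y u) - l t y u) x v := by
  intro t x v
  have hr : ρ t x v ≠ 0 := (hρpos t x v).ne'
  -- regularity of partial maps
  have hρV : ContDiff ℝ 2 (fun u => ρ t x u) := (hρxv t).comp (contDiff_const.prodMk contDiff_id)
  have hρX : ContDiff ℝ 2 (fun y => ρ t y v) := (hρxv t).comp (contDiff_id.prodMk contDiff_const)
  have hlV : ContDiff ℝ 2 (fun u => l t x u) := (hlxv t).comp (contDiff_const.prodMk contDiff_id)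
  have hlX : ContDiff ℝ 2 (fun y => l t y v) := (hlxv t).comp (contDiff_id.prodMk contDiff_const)
  have hlogV : ContDiff ℝ 2 (fun u => Real.log (ρ t x u)) := by
    rw [contDiff_iff_contDiffAt]
    intro u
    exact (hρV.contDiffAt).log (hρpos t x u).ne'
  have hlogX : ContDiff ℝ 2 (fun y => Real.log (ρ t y v)) := by
    rw [contDiff_iff_contDiffAt]
    intro y
    exact (hρX.contDiffAt).log (hρpos t y v).ne'
  -- differentiability of the gradient fields
  have hGl : Differentiable ℝ (fun u => gradV (l t) x u) := gradient_differentiable _ hlV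
  have hHl : Differentiable ℝ (fun u => gradV (fun a b => Real.log (ρ t a b)) x u) :=
    gradient_differentiable _ hlogV
  -- the divX term
  have hdivX : divX (fun y u => ρ t y u • u) x v = ⟪gradient (fun y => ρ t y v) x, v⟫ := by
    show divergE (fun y => ρ t y v • v) x = _
    rw [divergE_smul_fun (fun y => ρ t y v) (fun _ => v) x
      (hρX.differentiable two_ne_zero x) (differentiableAt_const v), divergE_const]
    ring
  -- the velocity vector field
  set W : EuclideanSpace ℝ (Fin d) → EuclideanSpace ℝ (Fin d) := fun u =>
    -x + (4 : ℝ) • gradV (l t) x u - (2 : ℝ) • u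
      - (2 : ℝ) • gradV (fun a b => Real.log (ρ t a b)) x u with hWdef
  have hWdiff : DifferentiableAt ℝ W v := by
    refine DifferentiableAt.sub (DifferentiableAt.sub (DifferentiableAt.add
      (differentiableAt_const _) ((hGl v).const_smul (4:ℝ)))
      (differentiableAt_fun_id.const_smul (2:ℝ))) ((hHl v).const_smul (2:ℝ))
  have h1 : divergE (fun u => (4:ℝ) • gradV (l t) x u) v = 4 * lapV (l t) x v := by
    rw [divergE_smul_const 4 _ v (hGl v)]
    have : divergE (fun u => gradV (l t) x u) v = lapE (fun u => l t x u) v :=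
      divergE_gradient (fun u => l t x u) v hlV
    rw [this]; rfl
  have h2 : divergE (fun u : EuclideanSpace ℝ (Fin d) => (2:ℝ) • u) v = 2 * d := by
    rw [divergE_smul_const 2 (fun u => u) v differentiableAt_fun_id, divergE_id]
  have h1' : divergE (fun u => (2:ℝ) • gradV (fun a b => Real.log (ρ t a b)) x u) v
      = 2 * lapV (fun a b => Real.log (ρ t a b)) x v := by
    rw [divergE_smul_const 2 _ v (hHl v)]
    have : divergE (fun u => gradV (fun a b => Real.log (ρ t a b)) x u) v
        = lapE (fun u => Real.log (ρ t x u)) v :=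
      divergE_gradient (fun u => Real.log (ρ t x u)) v hlogV
    rw [this]; rfl
  have h3 : divergE (fun u => -x + (4:ℝ) • gradV (l t) x u) v = 4 * lapV (l t) x v := by
    rw [divergE_add (fun _ => -x) (fun u => (4:ℝ) • gradV (l t) x u) v
      (differentiableAt_const _) ((hGl v).const_smul (4:ℝ)), divergE_const, h1]
    ring
  have h4 : divergE (fun u => -x + (4:ℝ) • gradV (l t) x u - (2:ℝ) • u) v
      = 4 * lapV (l t) x v - 2 * d := by
    rw [divergE_sub (fun u => -x + (4:ℝ) • gradV (l t) x u) (fun u => (2:ℝ) • u) v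
      ((differentiableAt_const _).add ((hGl v).const_smul (4:ℝ)))
      (differentiableAt_fun_id.const_smul (2:ℝ)), h3, h2]
  have hdW : divergE W v = 4 * lapV (l t) x v - 2 * d
      - 2 * lapV (fun a b => Real.log (ρ t a b)) x v := by
    rw [hWdef]
    rw [divergE_sub (fun u => -x + (4:ℝ) • gradV (l t) x u - (2:ℝ) • u)
      (fun u => (2:ℝ) • gradV (fun a b => Real.log (ρ t a b)) x u) v
      (((differentiableAt_const _).add ((hGl v).const_smul (4:ℝ))).sub
        (differentiableAt_fun_id.const_smul (2:ℝ))) ((hHl v).const_smul (2:ℝ)), h4, h1']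
  -- the divV term
  have hdivV : divV (fun y u => ρ t y u •
        (-y + (4 : ℝ) • gradV (l t) y u - (2 : ℝ) • u
          - (2 : ℝ) • gradV (fun a b => Real.log (ρ t a b)) y u)) x v
      = ⟪gradient (fun u => ρ t x u) v, W v⟫ + ρ t x v * divergE W v := by
    show divergE (fun u => ρ t x u • W u) v = _
    exact divergE_smul_fun _ _ v (hρV.differentiable two_ne_zero v) hWdiff
  -- time derivative of η
  have ht : deriv (fun s => Real.log (ρ s x v) - l s x v) t
      = deriv (fun s => ρ s x v) t / ρ t x v - deriv (fun s => l s x v) t := by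
    have h1 : HasDerivAt (fun s => Real.log (ρ s x v))
        (deriv (fun s => ρ s x v) t / ρ t x v) t := ((hρt x v t).hasDerivAt).log hr
    exact (h1.sub ((hlt x v t).hasDerivAt)).deriv
  -- gradient identities
  have hHv : gradV (fun a b => Real.log (ρ t a b)) x v
      = (ρ t x v)⁻¹ • gradient (fun u => ρ t x u) v := by
    show gradient (fun u => Real.log (ρ t x u)) v = _
    exact gradient_log' _ v (hρV.differentiable two_ne_zero v) hr
  have hgradXη : gradX (fun y u => Real.log (ρ t y u) - l t y u) x v
      = (ρ t x v)⁻¹ • gradient (fun y => ρ t y v) x - gradX (l t) x v := by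
    show gradient (fun y => Real.log (ρ t y v) - l t y v) x = _
    rw [gradient_sub' _ _ x (hlogX.differentiable two_ne_zero x) (hlX.differentiable two_ne_zero x),
      gradient_log' _ x (hρX.differentiable two_ne_zero x) hr]
    rfl
  have hgradVη : gradV (fun y u => Real.log (ρ t y u) - l t y u) x v
      = (ρ t x v)⁻¹ • gradient (fun u => ρ t x u) v - gradV (l t) x v := by
    show gradient (fun u => Real.log (ρ t x u) - l t x u) v = _
    rw [gradient_sub' _ _ v (hlogV.differentiable two_ne_zero v) (hlV.differentiable two_ne_zero v),
      gradient_log' _ v (hρV.differentiable two_ne_zero v) hr]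
    rfl
  have hlapVη : lapV (fun y u => Real.log (ρ t y u) - l t y u) x v
      = lapV (fun a b => Real.log (ρ t a b)) x v - lapV (l t) x v := by
    show lapE (fun u => Real.log (ρ t x u) - l t x u) v = _
    exact lapE_sub _ _ v hlogV hlV
  -- value of W at v
  have hWv : W v = -x + (4 : ℝ) • gradV (l t) x v - (2 : ℝ) • v
      - (2 : ℝ) • ((ρ t x v)⁻¹ • gradient (fun u => ρ t x u) v) := by
    rw [hWdef]; simp only [hHv]
  -- derive the value of ∂ₜρ from the Fokker–Planck equation
  have hFP' : deriv (fun s => ρ s x v) t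
      = -⟪gradient (fun y => ρ t y v) x, v⟫
        - (⟪gradient (fun u => ρ t x u) v, W v⟫
          + ρ t x v * (4 * lapV (l t) x v - 2 * d
            - 2 * lapV (fun a b => Real.log (ρ t a b)) x v)) := by
    have := hFP t x v
    rw [hdivX, hdivV, hdW] at this
    linarith
  -- put everything together
  rw [ht, hFP', hl t x v, hgradXη, hgradVη, hlapVη, hWv]
  -- abbreviate
  set r : ℝ := ρ t x v with hrr
  set P := gradient (fun y => ρ t y v) x with hP
  set Q := gradient (fun u => ρ t x u) v with hQ
  set A := gradX (l t) x v with hA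
  set B := gradV (l t) x v with hB
  set Ll := lapV (l t) x v with hLl
  set Lρ := lapV (fun a b => Real.log (ρ t a b)) x v with hLr
  have hcomm1 : ⟪B, Q⟫ = ⟪Q, B⟫ := real_inner_comm _ _
  have hcomm2 : ⟪B, x⟫ = ⟪x, B⟫ := real_inner_comm _ _
  have hcomm3 : ⟪B, v⟫ = ⟪v, B⟫ := real_inner_comm _ _
  have hcomm4 : ⟪Q, x⟫ = ⟪x, Q⟫ := real_inner_comm _ _
  have hcomm5 : ⟪Q, v⟫ = ⟪v, Q⟫ := real_inner_comm _ _
  simp only [← real_inner_self_eq_norm_sq, inner_sub_left, inner_sub_right, inner_add_left,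
    inner_add_right, inner_neg_left, inner_neg_right, real_inner_smul_left, real_inner_smul_right,
    hcomm1, hcomm2, hcomm3, hcomm4, hcomm5]
  field_simp
  ring
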